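/- Let d ≥ 1 and 0 < r < 1. There exists a constant C < ∞, depending only on d and r, such that for every function f of class C¹ on (−r,r) × B_{d−1} and every b ∈ ℝ∖{0}: |∫_{B_{d−1}} ∫_{−r}^{r} f(x,y)/(ib − x) dx d^{d−1}y| ≤ C·‖f‖_{C¹}. -/

import Mathlib

open MeasureTheory Complex Real
open scoped ENNReal

noncomputable section

namespace LatSch

/-- The lattice `Γ = ℤ^d`. -/
abbrev Γd (d : ℕ) := Fin d → ℤ

/-- The Hilbert space `ℓ²(Γ)`. -/
abbrev L2 (d : ℕ) := lp (fun _ : Γd d => ℂ) 2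

/-- Euclidean norm of a lattice point. -/
def lnorm {d : ℕ} (x : Γd d) : ℝ := Real.sqrt (∑ i, ((x i : ℝ)) ^ 2)

/-- The standard basis vector `δ_x` of `ℓ²(Γ)`. -/
def delta {d : ℕ} (x : Γd d) : L2 d := lp.single 2 x 1

local notation "⟪" a ", " b "⟫" => @inner ℂ _ _ a b

/-- The cube `[-π, π]^d`, a fundamental domain of the torus. -/
def torusBox (d : ℕ) : Set (Fin d → ℝ) := Set.univ.pi fun _ => Set.Icc (-π) π

/-- `⟨p, m⟩` for `p ∈ ℝ^d`, `m ∈ ℤ^d`. -/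
def dotZ {d : ℕ} (p : Fin d → ℝ) (m : Γd d) : ℝ := ∑ i, p i * (m i : ℝ)

/-- Fourier coefficient `f̂(m) = (2π)^{-d} ∫_{[-π,π]^d} f(p) e^{i⟨p,m⟩} dp`. -/
def fCoeff {d : ℕ} (f : (Fin d → ℝ) → ℝ) (m : Γd d) : ℂ :=
  ((1 / (2 * π) ^ d : ℝ) : ℂ) *
    ∫ p in torusBox d, (f p : ℂ) * Complex.exp (Complex.I * (dotZ p m : ℝ))

/-- `H` is the Fourier multiplier (hopping matrix) `h(f)`, characterized by its
matrix elements `⟨δ_x, H δ_y⟩ = f̂(x - y)`. -/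
def IsMultiplier {d : ℕ} (f : (Fin d → ℝ) → ℝ) (H : L2 d →L[ℂ] L2 d) : Prop :=
  ∀ x y : Γd d, ⟪delta x, H (delta y)⟫ = fCoeff f (x - y)

/-- `M` is the operator of multiplication by the potential `V`. -/
def IsMulOp {d : ℕ} (V : Γd d → ℝ) (M : L2 d →L[ℂ] L2 d) : Prop :=
  ∀ (ψ : L2 d) (x : Γd d), (M ψ : ∀ _ : Γd d, ℂ) x = (V x : ℂ) * (ψ : ∀ _ : Γd d, ℂ) x

/-- Partial derivative `∂_{p_k} f (p)`. -/
def pd {d : ℕ} (f : (Fin d → ℝ) → ℝ) (k : Fin d) (p : Fin d → ℝ) : ℝ :=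
  fderiv ℝ f p (Pi.single k 1)

/-- `|∇f|²(p) = Σ_k (∂_{p_k} f(p))²`. -/
def gradSq {d : ℕ} (f : (Fin d → ℝ) → ℝ) (p : Fin d → ℝ) : ℝ := ∑ k, pd f k p ^ 2

/-- The Hessian matrix of `f` at `p`. -/
def hess {d : ℕ} (f : (Fin d → ℝ) → ℝ) (p : Fin d → ℝ) : Matrix (Fin d) (Fin d) ℝ :=
  Matrix.of fun i j => fderiv ℝ (fun q => fderiv ℝ f q (Pi.single j 1)) p (Pi.single i 1)

/-- All critical points of `f` are nondegenerate (`f` is a Morse function). -/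
def IsMorse {d : ℕ} (f : (Fin d → ℝ) → ℝ) : Prop :=
  ∀ p, fderiv ℝ f p = 0 → (hess f p).det ≠ 0

/-- `2πℤ^d`-periodicity. -/
def Periodic2pi {d : ℕ} (f : (Fin d → ℝ) → ℝ) : Prop :=
  ∀ (p : Fin d → ℝ) (m : Γd d), f (p + fun i => 2 * π * (m i : ℝ)) = f p

/-- A dispersion relation: a `2πℤ^d`-periodic function with minimum `0`. -/
def IsDispersion {d : ℕ} (f : (Fin d → ℝ) → ℝ) : Prop :=
  Periodic2pi f ∧ (∀ p, 0 ≤ f p) ∧ (∃ p, f p = 0)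

/-- Condition (M): `𝔢` and `|∇𝔢|²` are Morse functions. -/
def CondM {d : ℕ} (f : (Fin d → ℝ) → ℝ) : Prop := IsMorse f ∧ IsMorse (gradSq f)

/-- `Φ_{m,n}(V) = (Σ_x |V(x)|^{1/m} (1+|x|)^n)^m`, valued in `[0,∞]`. -/
def Phi {d : ℕ} (m n : ℕ) (V : Γd d → ℝ) : ℝ≥0∞ :=
  (∑' x : Γd d, ENNReal.ofReal (|V x| ^ ((1 : ℝ) / m) * (1 + lnorm x) ^ n)) ^ m

/-- The set of eigenvectors of `H` (with real eigenvalue). -/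
def eigvecs {d : ℕ} (H : L2 d →L[ℂ] L2 d) : Set (L2 d) :=
  {ψ : L2 d | ψ ≠ 0 ∧ ∃ μ : ℝ, H ψ = (μ : ℂ) • ψ}

/-- `N_pp[H]`: the Hilbert-space dimension of the closed linear span of all
eigenvectors of `H`. -/
def Npp {d : ℕ} (H : L2 d →L[ℂ] L2 d) : Cardinal :=
  Module.rank ℂ ((Submodule.span ℂ (eigvecs H)).topologicalClosure)

/-- The Fourier transform `ĝ_x(p) = (i/2·|∇𝔢(p)|² + ⟨∇𝔢(p), x⟩) e^{-i⟨p,x⟩}`. -/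
def ghat {d : ℕ} (e : (Fin d → ℝ) → ℝ) (x : Γd d) (p : Fin d → ℝ) : ℂ :=
  ((Complex.I / 2) * ((gradSq e p : ℝ) : ℂ) + ((∑ k, pd e k p * (x k : ℝ) : ℝ) : ℂ)) *
    Complex.exp (-(Complex.I * (dotZ p x : ℝ)))

/-- `g : Γ → ℓ²(Γ)` is the family of vectors `g_x` with Fourier transform `ĝ_x`. -/
def IsGVec {d : ℕ} (e : (Fin d → ℝ) → ℝ) (g : Γd d → L2 d) : Prop :=
  ∀ x m : Γd d,
    (g x : ∀ _ : Γd d, ℂ) m =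
      ((1 / (2 * π) ^ d : ℝ) : ℂ) *
        ∫ p in torusBox d, ghat e x p * Complex.exp (Complex.I * (dotZ p m : ℝ))

/-- `C` is the bounded self-adjoint realization
`C_V = Σ_x i V(x) (|δ_x⟩⟨g_x| - |g_x⟩⟨δ_x|)` of the commutator `i[V, A(𝔢)]`. -/
def IsCommOp {d : ℕ} (V : Γd d → ℝ) (g : Γd d → L2 d) (C : L2 d →L[ℂ] L2 d) : Prop :=
  ∀ ψ : L2 d,
    HasSum (fun x : Γd d =>
      (Complex.I * (V x : ℂ)) • (⟪g x, ψ⟫ • delta x - ⟪delta x, ψ⟫ • g x)) (C ψ)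

/-- `R` is the resolvent `(z - H)^{-1}`. -/
def IsResolventAt {d : ℕ} (H : L2 d →L[ℂ] L2 d) (z : ℂ) (R : L2 d →L[ℂ] L2 d) : Prop :=
  R.comp (z • (1 : L2 d →L[ℂ] L2 d) - H) = 1 ∧ (z • (1 : L2 d →L[ℂ] L2 d) - H).comp R = 1

/-- `‖f‖_{C^m} ≤ C`: all partial derivatives of order `≤ m` are bounded by `C`. -/
def CmNormLe {d : ℕ} (m : ℕ) (f : (Fin d → ℝ) → ℝ) (C : ℝ) : Prop :=
  ∀ j : ℕ, j ≤ m → ∀ (p : Fin d → ℝ) (k : Fin j → Fin d),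
    |iteratedFDeriv ℝ j f p (fun i => Pi.single (k i) 1)| ≤ C

/-- `K(𝔢) ≥ K`: at every critical point, every eigenvalue `λ` of the Hessian
satisfies `|λ|^{1/2} ≥ K`. -/
def MinCurvGe {d : ℕ} (f : (Fin d → ℝ) → ℝ) (K : ℝ) : Prop :=
  ∀ p, fderiv ℝ f p = 0 → ∀ (lam : ℝ) (v : Fin d → ℝ), v ≠ 0 →
    (hess f p).mulVec v = lam • v → K ^ 2 ≤ |lam|

/-- The set of thresholds `Thr(𝔢) = 𝔢(Crit(𝔢))`. -/
def Thr {d : ℕ} (f : (Fin d → ℝ) → ℝ) : Set ℝ := f '' {p | fderiv ℝ f p = 0}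


/-- The number of strictly negative eigenvalues of `C`, counted with multiplicity:
the dimension of the span of eigenvectors with strictly negative eigenvalue. -/
def NegCount {d : ℕ} (C : L2 d →L[ℂ] L2 d) : Cardinal :=
  Module.rank ℂ (Submodule.span ℂ
    {ψ : L2 d | ψ ≠ 0 ∧ ∃ μ : ℝ, μ < 0 ∧ C ψ = (μ : ℂ) • ψ})

/-- The number of strictly positive eigenvalues of `C`, counted with multiplicity. -/
def PosCount {d : ℕ} (C : L2 d →L[ℂ] L2 d) : Cardinal :=
  Module.rank ℂ (Submodule.span ℂ
    {ψ : L2 d | ψ ≠ 0 ∧ ∃ μ : ℝ, 0 < μ ∧ C ψ = (μ : ℂ) • ψ})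



section AuxStatement16
open Set

lemma den_ne (b : ℝ) (hb : b ≠ 0) (x : ℝ) : Complex.I * (b:ℂ) - (x:ℂ) ≠ 0 := by
  intro h
  have := congrArg Complex.im h
  simp at this
  exact hb this

lemma norm_den_ge (b x : ℝ) : |x| ≤ ‖Complex.I * (b:ℂ) - (x:ℂ)‖ := by
  have h := Complex.abs_re_le_norm (Complex.I * (b:ℂ) - (x:ℂ))
  simpa using h

lemma key_decomp (b : ℝ) (hb : b ≠ 0) (x : ℝ) :
    (1:ℂ) / (Complex.I * (b:ℂ) - (x:ℂ)) =
      ((-x / (x^2+b^2) : ℝ) : ℂ) + ((-b / (x^2+b^2) : ℝ) : ℂ) * Complex.I := by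
  have hs : (x:ℝ)^2 + b^2 ≠ 0 := by positivity
  rw [div_eq_iff (den_ne b hb x)]
  push_cast
  have h2 : ((x:ℂ)^2 + (b:ℂ)^2) ≠ 0 := by
    have := Complex.ofReal_ne_zero.mpr hs
    push_cast at this
    convert this using 2 <;> ring_nf
  field_simp [h2]
  ring_nf
  rw [Complex.I_sq]
  ring

lemma J_bound (r b : ℝ) (hr : 0 < r) (hb : b ≠ 0) :
    ‖∫ x in Ioo (-r) r, (1:ℂ) / (Complex.I * (b:ℂ) - (x:ℂ))‖ ≤ π := by
  have hs : ∀ x : ℝ, x^2 + b^2 ≠ 0 := fun x => by positivity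
  -- convert to interval integral
  rw [← MeasureTheory.integral_Ioc_eq_integral_Ioo,
      ← intervalIntegral.integral_of_le (by linarith : -r ≤ r)]
  have hcont1 : Continuous fun x : ℝ => -x / (x^2+b^2) := by
    apply Continuous.div (by continuity) (by continuity) hs
  have hcont2 : Continuous fun x : ℝ => -b / (x^2+b^2) := by
    apply Continuous.div (by continuity) (by continuity) hs
  have heq : ∀ x : ℝ, (1:ℂ) / (Complex.I * (b:ℂ) - (x:ℂ)) =
      ((-x / (x^2+b^2) : ℝ) : ℂ) + ((-b / (x^2+b^2) : ℝ) : ℂ) * Complex.I :=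
    key_decomp b hb
  rw [intervalIntegral.integral_congr (fun x _ => heq x)]
  have i1 : IntervalIntegrable (fun x : ℝ => ((-x/(x^2+b^2) : ℝ) : ℂ)) volume (-r) r :=
    (Complex.continuous_ofReal.comp hcont1).intervalIntegrable _ _
  have i2 : IntervalIntegrable (fun x : ℝ => ((-b/(x^2+b^2) : ℝ) : ℂ) * Complex.I)
      volume (-r) r :=
    ((Complex.continuous_ofReal.comp hcont2).mul continuous_const).intervalIntegrable _ _
  rw [intervalIntegral.integral_add i1 i2,
    intervalIntegral.integral_mul_const, intervalIntegral.integral_ofReal,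
    intervalIntegral.integral_ofReal]
  -- first integral is zero
  have h1 : (∫ x in (-r)..r, -x / (x^2+b^2)) = 0 := by
    have hF : ∀ x : ℝ, HasDerivAt (fun x : ℝ => -(1/2) * Real.log (x^2+b^2))
        (-x / (x^2+b^2)) x := by
      intro x
      have h1 : HasDerivAt (fun x : ℝ => x^2+b^2) (2*x) x := by
        simpa using ((hasDerivAt_pow 2 x).add_const (b^2))
      have := (h1.log (hs x)).const_mul (-(1/2) : ℝ)
      refine this.congr_deriv ?_
      field_simp
    rw [intervalIntegral.integral_eq_sub_of_hasDerivAt (fun x _ => hF x)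
      (hcont1.intervalIntegrable _ _)]
    simp [neg_pow]
  have h2 : ∀ x : ℝ, HasDerivAt (fun x : ℝ => -Real.arctan (x/b)) (-b / (x^2+b^2)) x := by
    intro x
    have h1 : HasDerivAt (fun x : ℝ => x/b) (1/b) x := (hasDerivAt_id x).div_const b
    have := ((Real.hasDerivAt_arctan (x/b)).comp x h1).neg
    refine this.congr_deriv ?_
    field_simp
    ring
  have h3 : (∫ x in (-r)..r, -b / (x^2+b^2)) =
      -Real.arctan (r/b) + Real.arctan (-r/b) := by
    rw [intervalIntegral.integral_eq_sub_of_hasDerivAt (fun x _ => h2 x)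
      (hcont2.intervalIntegrable _ _)]
    ring
  rw [h1, h3]
  simp only [Complex.ofReal_zero, zero_add]
  rw [norm_mul, Complex.norm_I, mul_one, Complex.norm_real]
  rw [Real.norm_eq_abs, neg_div, Real.arctan_neg]
  have a1 := Real.arctan_lt_pi_div_two (r/b)
  have a2 := Real.neg_pi_div_two_lt_arctan (r/b)
  rw [abs_le]
  constructor <;> nlinarith


lemma inner_bound (r b M : ℝ) (hr : 0 < r) (hb : b ≠ 0) (hM : 0 ≤ M) (g : ℝ → ℝ)
    (hg : ContinuousOn g (Ioo (-r) r))
    (hg0 : |g 0| ≤ M)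
    (hlip : ∀ x ∈ Ioo (-r) r, |g x - g 0| ≤ M * |x|) :
    ‖∫ x in Ioo (-r) r, (g x : ℂ) / (Complex.I * (b:ℂ) - (x:ℂ))‖ ≤ (π + 2*r) * M := by
  set D : ℝ → ℂ := fun x => Complex.I * (b:ℂ) - (x:ℂ) with hD
  have hDne : ∀ x : ℝ, D x ≠ 0 := den_ne b hb
  have hDpos : ∀ x : ℝ, 0 < ‖D x‖ := fun x => norm_pos_iff.2 (hDne x)
  have hDcont : Continuous D := by continuity
  have hDb : ∀ x : ℝ, |b| ≤ ‖D x‖ := by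
    intro x
    have h := Complex.abs_im_le_norm (D x)
    simpa [hD] using h
  set h1 : ℝ → ℂ := fun x => ((g x - g 0 : ℝ) : ℂ) / D x with hh1
  set h2 : ℝ → ℂ := fun x => ((g 0 : ℝ) : ℂ) / D x with hh2
  have hmeas : MeasurableSet (Ioo (-r) r) := measurableSet_Ioo
  have hfin : volume (Ioo (-r) r) < ⊤ := measure_Ioo_lt_top
  have hb1 : ∀ x ∈ Ioo (-r) r, ‖h1 x‖ ≤ M := by
    intro x hx
    have he : ‖h1 x‖ = |g x - g 0| / ‖D x‖ := by
      simp only [hh1, norm_div, Complex.norm_real, Real.norm_eq_abs]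
    rw [he]
    calc |g x - g 0| / ‖D x‖ ≤ (M * |x|) / ‖D x‖ :=
          (div_le_div_iff_of_pos_right (hDpos x)).2 (hlip x hx)
      _ ≤ M := by
          rw [div_le_iff₀ (hDpos x)]
          calc M * |x| ≤ M * ‖D x‖ :=
                mul_le_mul_of_nonneg_left (norm_den_ge b x) hM
            _ = M * ‖D x‖ := rfl
  have hb2 : ∀ x : ℝ, ‖h2 x‖ ≤ M / |b| := by
    intro x
    have he : ‖h2 x‖ = |g 0| / ‖D x‖ := by
      simp only [hh2, norm_div, Complex.norm_real, Real.norm_eq_abs]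
    rw [he]
    exact div_le_div₀ hM hg0 (abs_pos.2 hb) (hDb x)
  -- integrability
  have hgC : ContinuousOn (fun x => ((g x - g 0 : ℝ) : ℂ)) (Ioo (-r) r) :=
    Complex.continuous_ofReal.comp_continuousOn (hg.sub continuousOn_const)
  have h1C : ContinuousOn h1 (Ioo (-r) r) :=
    hgC.div (hDcont.continuousOn) (fun x _ => hDne x)
  have h2C : Continuous h2 := continuous_const.div hDcont hDne
  have ic : IntegrableOn (fun _ : ℝ => M) (Ioo (-r) r) volume :=
    integrableOn_const hfin.ne
  have ih1 : IntegrableOn h1 (Ioo (-r) r) volume := by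
    refine Integrable.mono' ic (h1C.aestronglyMeasurable hmeas) ?_
    exact (ae_restrict_iff' hmeas).2 (Filter.Eventually.of_forall hb1)
  have ih2 : IntegrableOn h2 (Ioo (-r) r) volume := by
    refine Integrable.mono' (integrableOn_const (C := M / |b|) hfin.ne)
      (h2C.aestronglyMeasurable) ?_
    exact Filter.Eventually.of_forall hb2
  -- split
  have hsplit : ∀ x : ℝ, (g x : ℂ) / D x = h1 x + h2 x := by
    intro x
    rw [hh1, hh2]
    simp only [← add_div]
    push_cast
    ring_nf
  rw [show (∫ x in Ioo (-r) r, (g x : ℂ) / (Complex.I * (b:ℂ) - (x:ℂ)))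
      = ∫ x in Ioo (-r) r, (h1 x + h2 x) from
    MeasureTheory.integral_congr_ae (Filter.Eventually.of_forall fun x => hsplit x)]
  rw [MeasureTheory.integral_add ih1 ih2]
  have n1 : ‖∫ x in Ioo (-r) r, h1 x‖ ≤ M * (2 * r) := by
    have := norm_setIntegral_le_of_norm_le_const hfin hb1
    rwa [measureReal_def, Real.volume_Ioo, show r - -r = 2 * r by ring,
      ENNReal.toReal_ofReal (by linarith)] at this
  have n2 : ‖∫ x in Ioo (-r) r, h2 x‖ ≤ M * π := by
    have he : (∫ x in Ioo (-r) r, h2 x)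
        = ((g 0 : ℝ) : ℂ) * ∫ x in Ioo (-r) r, (1 : ℂ) / D x := by
      rw [← MeasureTheory.integral_const_mul]
      congr 1
      ext x
      rw [hh2]
      ring
    rw [he, norm_mul, Complex.norm_real, Real.norm_eq_abs]
    have hJ := J_bound r b hr hb
    exact mul_le_mul hg0 hJ (norm_nonneg _) hM
  calc ‖(∫ x in Ioo (-r) r, h1 x) + ∫ x in Ioo (-r) r, h2 x‖
      ≤ ‖∫ x in Ioo (-r) r, h1 x‖ + ‖∫ x in Ioo (-r) r, h2 x‖ := norm_add_le _ _
    _ ≤ M * (2 * r) + M * π := add_le_add n1 n2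
    _ = (π + 2 * r) * M := by ring

end AuxStatement16

/-- Lemma 1: one-dimensional singularity.
For `d ≥ 1` and `0 < r < 1` there is `C < ∞`, depending only on `d` and `r`, such that
for every `C¹` function `f` on `(-r,r) × B_{d-1}` with `‖f‖_{C¹} ≤ M` and every
`b ≠ 0`: `|∫_{B_{d-1}} ∫_{-r}^r f(x,y)/(ib - x) dx dy| ≤ C M`. -/
theorem statement16 (d : ℕ) (hd : 1 ≤ d) (r : ℝ) (hr0 : 0 < r) (hr1 : r < 1) :
    ∃ c : ℝ, ∀ (f : ℝ × EuclideanSpace ℝ (Fin (d - 1)) → ℝ) (M : ℝ) (b : ℝ), b ≠ 0 →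
      ContDiffOn ℝ 1 f
        (Set.Ioo (-r) r ×ˢ Metric.ball (0 : EuclideanSpace ℝ (Fin (d - 1))) r) →
      (∀ q ∈ Set.Ioo (-r) r ×ˢ Metric.ball (0 : EuclideanSpace ℝ (Fin (d - 1))) r,
        |f q| ≤ M) →
      (∀ q ∈ Set.Ioo (-r) r ×ˢ Metric.ball (0 : EuclideanSpace ℝ (Fin (d - 1))) r,
        |fderivWithin ℝ f
            (Set.Ioo (-r) r ×ˢ Metric.ball (0 : EuclideanSpace ℝ (Fin (d - 1))) r) q
            (1, 0)| ≤ M) →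
      (∀ q ∈ Set.Ioo (-r) r ×ˢ Metric.ball (0 : EuclideanSpace ℝ (Fin (d - 1))) r,
        ∀ i : Fin (d - 1),
          |fderivWithin ℝ f
              (Set.Ioo (-r) r ×ˢ Metric.ball (0 : EuclideanSpace ℝ (Fin (d - 1))) r) q
              (0, EuclideanSpace.single i 1)| ≤ M) →
      ‖∫ y in Metric.ball (0 : EuclideanSpace ℝ (Fin (d - 1))) r,
          ∫ x in Set.Ioo (-r) r, (f (x, y) : ℂ) / (Complex.I * (b : ℂ) - (x : ℂ))‖ ≤
        c * M := by
  set E := EuclideanSpace ℝ (Fin (d - 1)) with hE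
  refine ⟨(π + 2 * r) * (volume (Metric.ball (0 : E) r)).toReal, ?_⟩
  intro f M b hb hC1 hsup hdx _
  set S := Set.Ioo (-r) r ×ˢ Metric.ball (0 : E) r with hS
  have hSopen : IsOpen S := isOpen_Ioo.prod Metric.isOpen_ball
  have h0r : (0 : ℝ) ∈ Set.Ioo (-r) r := ⟨by linarith, hr0⟩
  have h0S : ((0 : ℝ), (0 : E)) ∈ S := ⟨h0r, Metric.mem_ball_self hr0⟩
  have hM : 0 ≤ M := le_trans (abs_nonneg _) (hsup _ h0S)
  have hin : ∀ y ∈ Metric.ball (0 : E) r,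
      ‖∫ x in Set.Ioo (-r) r, (f (x, y) : ℂ) / (Complex.I * (b : ℂ) - (x : ℂ))‖ ≤
        (π + 2 * r) * M := by
    intro y hy
    have hmemS : ∀ t ∈ Set.Ioo (-r) r, ((t, y) : ℝ × E) ∈ S := fun t ht => ⟨ht, hy⟩
    apply inner_bound r b M hr0 hb hM (fun x => f (x, y))
    · exact hC1.continuousOn.comp
        ((continuous_id.prodMk continuous_const).continuousOn) hmemS
    · exact hsup (0, y) (hmemS 0 h0r)
    · intro x hx
      have hdiff : ∀ t ∈ Set.Ioo (-r) r,
          HasDerivWithinAt (fun s : ℝ => f (s, y)) (fderiv ℝ f (t, y) (1, 0))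
            (Set.Ioo (-r) r) t := by
        intro t ht
        have hfd : DifferentiableAt ℝ f (t, y) :=
          (hC1.differentiableOn one_ne_zero).differentiableAt (hSopen.mem_nhds (hmemS t ht))
        have hcurve : HasDerivAt (fun s : ℝ => ((s, y) : ℝ × E)) (1, 0) t :=
          (hasDerivAt_id t).prodMk (hasDerivAt_const t y)
        exact (hfd.hasFDerivAt.comp_hasDerivAt t hcurve).hasDerivWithinAt
      have hbound : ∀ t ∈ Set.Ioo (-r) r, ‖fderiv ℝ f (t, y) (1, 0)‖ ≤ M := by
        intro t ht
        have := hdx (t, y) (hmemS t ht)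
        rwa [fderivWithin_of_isOpen hSopen (hmemS t ht), ← Real.norm_eq_abs] at this
      have := Convex.norm_image_sub_le_of_norm_hasDerivWithin_le hdiff hbound
        (convex_Ioo _ _) h0r hx
      simpa [Real.norm_eq_abs] using this
  have := norm_setIntegral_le_of_norm_le_const (show volume (Metric.ball (0 : E) r) < ⊤ from measure_ball_lt_top)
    hin
  calc ‖∫ y in Metric.ball (0 : E) r,
        ∫ x in Set.Ioo (-r) r, (f (x, y) : ℂ) / (Complex.I * (b : ℂ) - (x : ℂ))‖
      ≤ (π + 2 * r) * M * (volume (Metric.ball (0 : E) r)).toReal := this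
    _ = (π + 2 * r) * (volume (Metric.ball (0 : E) r)).toReal * M := by ring



end LatSch
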